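/- Define r(x) = (72x² − 5x)/(100x² + 1) and m_2(x) = (102x² − 1)/(100x² + 1). Then |r(x)| ≤ 1 for all x ∈ [−1, 1], and r′(1) = 639/10201 > 404/10201 = m_2′(1). -/

import Mathlib

open Set

theorem pole_condition_essential_counterexample
    (r m2 : ℝ → ℝ)
    (hr : ∀ x : ℝ, r x = (72 * x ^ 2 - 5 * x) / (100 * x ^ 2 + 1))
    (hm2 : ∀ x : ℝ, m2 x = (102 * x ^ 2 - 1) / (100 * x ^ 2 + 1)) :
    (∀ x ∈ Icc (-1 : ℝ) 1, |r x| ≤ 1) ∧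
    deriv r 1 = 639 / 10201 ∧
    (639 : ℝ) / 10201 > 404 / 10201 ∧
    deriv m2 1 = 404 / 10201 := by
  have hrf : r = fun x : ℝ => (72 * x ^ 2 - 5 * x) / (100 * x ^ 2 + 1) := funext hr
  have hmf : m2 = fun x : ℝ => (102 * x ^ 2 - 1) / (100 * x ^ 2 + 1) := funext hm2
  have hden : HasDerivAt (fun x : ℝ => 100 * x ^ 2 + 1) 200 1 := by
    have := ((hasDerivAt_pow 2 (1 : ℝ)).const_mul 100).add_const 1
    exact this.congr_deriv (by norm_num)
  have hd0 : (100 * (1 : ℝ) ^ 2 + 1) ≠ 0 := by norm_num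
  refine ⟨?_, ?_, by norm_num, ?_⟩
  · intro x hx
    obtain ⟨h1, h2⟩ := hx
    rw [hr, abs_le]
    have hpos : (0 : ℝ) < 100 * x ^ 2 + 1 := by positivity
    constructor
    · rw [le_div_iff₀ hpos]; nlinarith [sq_nonneg (2*x + 5), sq_nonneg x]
    · rw [div_le_iff₀ hpos]; nlinarith [sq_nonneg (10*x - 1), sq_nonneg x]
  · have hnum : HasDerivAt (fun x : ℝ => 72 * x ^ 2 - 5 * x) 139 1 := by
      have := ((hasDerivAt_pow 2 (1 : ℝ)).const_mul 72).sub ((hasDerivAt_id 1).const_mul 5)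
      exact this.congr_deriv (by norm_num)
    have h := hnum.div hden hd0
    rw [hrf]
    rw [show deriv (fun x : ℝ => (72 * x ^ 2 - 5 * x) / (100 * x ^ 2 + 1)) 1 = _ from h.deriv]
    norm_num
  · have hnum : HasDerivAt (fun x : ℝ => 102 * x ^ 2 - 1) 204 1 := by
      have := ((hasDerivAt_pow 2 (1 : ℝ)).const_mul 102).sub_const 1
      exact this.congr_deriv (by norm_num)
    have h := hnum.div hden hd0
    rw [hmf]
    rw [show deriv (fun x : ℝ => (102 * x ^ 2 - 1) / (100 * x ^ 2 + 1)) 1 = _ from h.deriv]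
    norm_num
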